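/- arXiv:2412.04156 — 4 statements merged into one kernel-verified Lean document; each statement's English description precedes it below -/
import Mathlib

section
/- Let Φ be a 2-CNF and l a literal. If there exists 0 ≤ t₀ ≤ T(Φ) such that every literal in ℒ(Φ,{l}) is true under the WalkSAT assignment σ^{(t₀)}, then every literal in ℒ(Φ,{l}) is true under σ^{(t)} for all t₀ < t ≤ T(Φ). -/
open Filter

open scoped Classical

/-- A literal is a sign (`true` = positive) together with a variable. -/
abbrev Lit (V : Type) := Bool × V

/-- A 2-clause is a disjunction of two literals. -/
abbrev Clause (V : Type) := Lit V × Lit V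

/-- A 2-CNF is a finite list of 2-clauses. -/
abbrev CNF (V : Type) := List (Clause V)

/-- The negation of a literal. -/
def Lit.negate {V : Type} (l : Lit V) : Lit V := (!l.1, l.2)

/-- A literal is satisfied by an assignment if the variable is assigned its sign. -/
def litSat {V : Type} (σ : V → Bool) (l : Lit V) : Prop := σ l.2 = l.1

/-- A clause is satisfied if one of its two literals is. -/
def clauseSat {V : Type} (σ : V → Bool) (c : Clause V) : Prop := litSat σ c.1 ∨ litSat σ c.2

/-- A 2-CNF is satisfied if all of its clauses are. -/
def cnfSat {V : Type} (σ : V → Bool) (Φ : CNF V) : Prop := ∀ c ∈ Φ, clauseSat σ c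

instance {V : Type} (σ : V → Bool) (l : Lit V) : Decidable (litSat σ l) := by
  unfold litSat; infer_instance

instance {V : Type} (σ : V → Bool) (c : Clause V) : Decidable (clauseSat σ c) := by
  unfold clauseSat; infer_instance

instance {V : Type} (σ : V → Bool) (Φ : CNF V) : Decidable (cnfSat σ Φ) := by
  unfold cnfSat; infer_instance

/-- In a proper 2-CNF, the two literals of each clause have distinct variables. -/
def validCNF {V : Type} (Φ : CNF V) : Prop := ∀ c ∈ Φ, c.1.2 ≠ c.2.2

/-- A set `L` of literals is closed under Unit Clause Propagation on `Φ`: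
whenever a clause can be written `¬ l' ∨ l''` with `l' ∈ L`, also `l'' ∈ L`. -/
def ucpClosed {V : Type} (Φ : CNF V) (L : Set (Lit V)) : Prop :=
  ∀ c ∈ Φ, (Lit.negate c.1 ∈ L → c.2 ∈ L) ∧ (Lit.negate c.2 ∈ L → c.1 ∈ L)

/-- `ℒ(Φ, {l})`: the set of literals produced by UCP from `{l}`, i.e. the least
set containing `l` that is closed under unit clause propagation. -/
def ucpLits {V : Type} (Φ : CNF V) (l : Lit V) : Set (Lit V) :=
  ⋂₀ {L : Set (Lit V) | l ∈ L ∧ ucpClosed Φ L}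

/-- `𝒱(Φ, {l})`: the variables underlying `ℒ(Φ, {l})`. -/
def ucpVars {V : Type} (Φ : CNF V) (l : Lit V) : Set V := Prod.snd '' ucpLits Φ l

/-! ### WalkSAT -/

/-- Flip the value of variable `v` in assignment `σ`. -/
def flipVar {V : Type} [DecidableEq V] (σ : V → Bool) (v : V) : V → Bool :=
  fun u => if u = v then !σ u else σ u

/-- The list of clauses of `Φ` violated by `σ`. -/
def violated {V : Type} (Φ : CNF V) (σ : V → Bool) : List (Clause V) :=
  Φ.filter fun c => decide (¬ clauseSat σ c)

/-- One step of WalkSAT, driven by a random seed `s`.  If `σ` violates some clause,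
then a violated clause is selected via `s.1 % (number of violated clauses)`
(this is a uniformly random violated clause, since `s.1` is uniform on
`Fin (Φ.length)!` and the number of violated clauses divides `(Φ.length)!`),
one of its two literals is selected via the uniform bit `s.2`, and the underlying
variable is flipped.  If `σ` satisfies `Φ`, nothing happens. -/
def wsNext {V : Type} [DecidableEq V] (Φ : CNF V) (s : ℕ × Bool) (σ : V → Bool) : V → Bool :=
  if h : (violated Φ σ).length = 0 then σ
  else
    let c := (violated Φ σ).get ⟨s.1 % (violated Φ σ).length, Nat.mod_lt _ (Nat.pos_of_ne_zero h)⟩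
    flipVar σ (if s.2 then c.1.2 else c.2.2)

/-- The space of random seeds driving one run of WalkSAT on `Φ` (at most
`100 n²` steps, each using an independent uniform pair).  The uniform measure on
this finite space makes each step's clause/literal choices uniform and independent. -/
abbrev wsSeedSpace (V : Type) [Fintype V] (Φ : CNF V) : Type :=
  Fin (100 * (Fintype.card V) ^ 2) → Fin (Nat.factorial Φ.length) × Bool

/-- `σ^{(t)}`: the WalkSAT assignment after `t` steps, starting from the all-true
assignment, for the realization `ω` of the random seeds.  After `100 n²` steps, or
once `Φ` is satisfied, the assignment no longer changes. -/
def wsState {V : Type} [Fintype V] [DecidableEq V] (Φ : CNF V) (ω : wsSeedSpace V Φ) :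
    ℕ → (V → Bool)
  | 0 => fun _ => true
  | t + 1 =>
    if h : t < 100 * (Fintype.card V) ^ 2 then
      wsNext Φ (((ω ⟨t, h⟩).1 : ℕ), (ω ⟨t, h⟩).2) (wsState Φ ω t)
    else wsState Φ ω t

/-- `T(Φ)`: the total number of flips WalkSAT performs, i.e. the first time the
current assignment satisfies `Φ` (capped at the time limit `100 n²`). -/
noncomputable def wsT {V : Type} [Fintype V] [DecidableEq V] (Φ : CNF V)
    (ω : wsSeedSpace V Φ) : ℕ :=
  sInf ({t | cnfSat (wsState Φ ω t) Φ} ∪ {100 * (Fintype.card V) ^ 2})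

/-- `N(Φ, l)`: the total number of times WalkSAT flips variables from `𝒱(Φ,{l})`. -/
noncomputable def wsN {V : Type} [Fintype V] [DecidableEq V] (Φ : CNF V)
    (ω : wsSeedSpace V Φ) (l : Lit V) : ℕ :=
  ∑ v ∈ (Set.toFinite (ucpVars Φ l)).toFinset,
    ∑ t ∈ Finset.Icc 1 (wsT Φ ω),
      if wsState Φ ω (t - 1) v ≠ wsState Φ ω t v then 1 else 0

/-- Expectation over the random choices of WalkSAT (uniform over all seeds). -/
noncomputable def wsExp {V : Type} [Fintype V] [DecidableEq V] (Φ : CNF V)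
    (g : wsSeedSpace V Φ → ℝ) : ℝ :=
  (∑ ω : wsSeedSpace V Φ, g ω) / (Fintype.card (wsSeedSpace V Φ) : ℝ)

/-! ### The random formula `Φ_{n,m}` -/

/-- A sample point for the random 2-CNF: an ordered tuple of `m` clauses on the
variables `x₁, …, xₙ`. -/
abbrev FSpace (n m : ℕ) : Type := Fin m → Clause (Fin n)

/-- The 2-CNF corresponding to a sample point. -/
def toCNF {n m : ℕ} (f : FSpace n m) : CNF (Fin n) := List.ofFn f

/-- The set of proper sample points: each of the `m` clauses is one of the
`4n(n-1)` 2-clauses on two distinct variables.  The uniform distribution on this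
finite set is exactly the distribution of `Φ_{n,m}` (m independent uniform clauses). -/
noncomputable def validFormulas (n m : ℕ) : Finset (FSpace n m) :=
  Finset.univ.filter fun f => ∀ i, (f i).1.2 ≠ (f i).2.2

/-- Probability of an event under the random 2-CNF `Φ_{n,m}`. -/
noncomputable def prF (n m : ℕ) (P : FSpace n m → Prop) : ℝ :=
  (((validFormulas n m).filter fun f => P f).card : ℝ) / ((validFormulas n m).card : ℝ)

/-- Expectation of a functional of the random 2-CNF `Φ_{n,m}`. -/
noncomputable def expF (n m : ℕ) (g : FSpace n m → ℝ) : ℝ :=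
  (∑ f ∈ validFormulas n m, g f) / ((validFormulas n m).card : ℝ)

/-- `X(Φ) = Σ_x (|𝒱(Φ,{x})|² + |𝒱(Φ,{¬x})|²)`. -/
noncomputable def Xval (n : ℕ) (Φ : CNF (Fin n)) : ℝ :=
  ∑ x : Fin n,
    (((ucpVars Φ (true, x)).ncard : ℝ) ^ 2 + ((ucpVars Φ (false, x)).ncard : ℝ) ^ 2)

lemma ucp_mem' {V : Type} (Φ : CNF V) (l : Lit V) : l ∈ ucpLits Φ l :=
  fun _ hL => hL.1

lemma ucp_closed' {V : Type} (Φ : CNF V) (l : Lit V) : ucpClosed Φ (ucpLits Φ l) := by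
  intro c hc
  constructor
  · intro h L hL; exact (hL.2 c hc).1 (h L hL)
  · intro h L hL; exact (hL.2 c hc).2 (h L hL)

/-- **Proposition 2.2.** Let `Φ` be a 2-CNF and `l` a literal.  For every realization `ω` of the
random choices of WalkSAT: if there exists `0 ≤ t₀ ≤ T(Φ)` such that every literal of `ℒ(Φ,{l})`
is true under `σ^{(t₀)}`, then every literal of `ℒ(Φ,{l})` is true under `σ^{(t)}` for all
`t₀ < t ≤ T(Φ)`. -/
theorem stmt_3 {V : Type} [Fintype V] [DecidableEq V] (Φ : CNF V) (hΦ : validCNF Φ)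
    (l : Lit V) (ω : wsSeedSpace V Φ) (t₀ : ℕ) (ht₀ : t₀ ≤ wsT Φ ω)
    (h : ∀ l' ∈ ucpLits Φ l, litSat (wsState Φ ω t₀) l') :
    ∀ t, t₀ < t → t ≤ wsT Φ ω → ∀ l' ∈ ucpLits Φ l, litSat (wsState Φ ω t) l' := by
  suffices H : ∀ t, t₀ ≤ t → t ≤ wsT Φ ω → ∀ l' ∈ ucpLits Φ l,
      litSat (wsState Φ ω t) l' by
    intro t ht1 ht2; exact H t ht1.le ht2
  intro t ht
  induction t, ht using Nat.le_induction with
  | base => intro _; exact h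
  | succ t ht ih =>
    intro hsucc
    have htT : t ≤ wsT Φ ω := le_of_lt (Nat.lt_of_succ_le hsucc)
    have IH := ih htT
    set σ := wsState Φ ω t with hσ
    have hnotsat : ¬ cnfSat σ Φ := by
      intro hs
      have : wsT Φ ω ≤ t := Nat.sInf_le (Or.inl hs)
      omega
    have hbound : t < 100 * (Fintype.card V) ^ 2 := by
      have : wsT Φ ω ≤ 100 * (Fintype.card V) ^ 2 := Nat.sInf_le (Or.inr rfl)
      omega
    have hvio : ¬ (violated Φ σ).length = 0 := by
      intro hlen
      apply hnotsat
      intro c hc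
      by_contra hcs
      have hmem : c ∈ violated Φ σ := List.mem_filter.mpr ⟨hc, by simpa using hcs⟩
      rw [List.length_eq_zero_iff] at hlen
      simp [hlen] at hmem
    have hstate : wsState Φ ω (t+1)
        = wsNext Φ (((ω ⟨t, hbound⟩).1 : ℕ), (ω ⟨t, hbound⟩).2) σ := by
      rw [wsState, dif_pos hbound]
    rw [hstate]
    unfold wsNext
    rw [dif_neg hvio]
    set s : ℕ × Bool := (((ω ⟨t, hbound⟩).1 : ℕ), (ω ⟨t, hbound⟩).2) with hs
    set c : Clause V := (violated Φ σ).get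
      ⟨s.1 % (violated Φ σ).length, Nat.mod_lt _ (Nat.pos_of_ne_zero hvio)⟩ with hc
    have hcmem : c ∈ violated Φ σ := List.get_mem _ _
    have hcΦ : c ∈ Φ := (List.mem_filter.mp hcmem).1
    have hcviol : ¬ clauseSat σ c := by
      have := (List.mem_filter.mp hcmem).2; simpa using this
    intro l' hl'
    have hsat : litSat σ l' := IH l' hl'
    have hne1 : ¬ litSat σ c.1 → l'.2 ≠ c.1.2 := by
      intro h1 heq
      have hsign : c.1.1 = !l'.1 := by
        unfold litSat at h1 hsat
        rw [← heq, hsat] at h1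
        cases hc11 : c.1.1 <;> cases hl1 : l'.1 <;> simp_all
      have hnegeq : Lit.negate c.1 = l' := by
        unfold Lit.negate
        rw [hsign, ← heq, Bool.not_not]
      have hc2 : c.2 ∈ ucpLits Φ l :=
        (ucp_closed' Φ l c hcΦ).1 (hnegeq ▸ hl')
      exact hcviol (Or.inr (IH c.2 hc2))
    have hne2 : ¬ litSat σ c.2 → l'.2 ≠ c.2.2 := by
      intro h1 heq
      have hsign : c.2.1 = !l'.1 := by
        unfold litSat at h1 hsat
        rw [← heq, hsat] at h1
        cases hc21 : c.2.1 <;> cases hl1 : l'.1 <;> simp_all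
      have hnegeq : Lit.negate c.2 = l' := by
        unfold Lit.negate
        rw [hsign, ← heq, Bool.not_not]
      have hc1 : c.1 ∈ ucpLits Φ l :=
        (ucp_closed' Φ l c hcΦ).2 (hnegeq ▸ hl')
      exact hcviol (Or.inl (IH c.1 hc1))
    have hne : l'.2 ≠ (if s.2 then c.1.2 else c.2.2) := by
      cases hb : s.2 with
      | true =>
        simp only [if_pos]
        exact hne1 (fun hh => hcviol (Or.inl hh))
      | false =>
        simp only [Bool.false_eq_true, if_neg, if_false]
        exact hne2 (fun hh => hcviol (Or.inr hh))
    show flipVar σ (if s.2 then c.1.2 else c.2.2) l'.2 = l'.1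
    rw [flipVar, if_neg hne]
    exact hsat
end

section
/- Let Φ be a satisfiable 2-CNF with variable set V and σ* a satisfying assignment of Φ. Then, for every realization of the random choices of WalkSAT, the total number of flips satisfies T(Φ) ≤ Σ_{x ∈ V} N(Φ, σ*(x)·x). -/
open Filter

open scoped Classical

/-- **Fact 2.4.** Let `Φ` be a satisfiable 2-CNF with satisfying assignment `σ*`.  Then, for every
realization `ω` of the random choices of WalkSAT, the total number of flips satisfies
`T(Φ) ≤ Σ_{x ∈ V} N(Φ, σ*(x)·x)`. -/
theorem stmt_4 {V : Type} [Fintype V] [DecidableEq V] (Φ : CNF V) (hΦ : validCNF Φ)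
    (σstar : V → Bool) (hsat : cnfSat σstar Φ) (ω : wsSeedSpace V Φ) :
    wsT Φ ω ≤ ∑ x : V, wsN Φ ω (σstar x, x) := by
  classical
  have flem : ∀ (σ : V → Bool) (v : V), ∃ u, σ u ≠ flipVar σ v u :=
    fun σ v => ⟨v, by simp [flipVar]⟩
  have hmemx : ∀ (b : Bool) (x : V), x ∈ (Set.toFinite (ucpVars Φ (b, x))).toFinset := by
    intro b x
    rw [Set.Finite.mem_toFinset]
    exact ⟨(b, x), fun L hL => hL.1, rfl⟩
  have key : ∀ t ∈ Finset.Icc 1 (wsT Φ ω),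
      ∃ v : V, wsState Φ ω (t - 1) v ≠ wsState Φ ω t v := by
    intro t ht
    rw [Finset.mem_Icc] at ht
    have hbound : wsT Φ ω ≤ 100 * (Fintype.card V) ^ 2 := Nat.sInf_le (Or.inr rfl)
    have hns : ¬ cnfSat (wsState Φ ω (t - 1)) Φ := by
      intro hc
      have : wsT Φ ω ≤ t - 1 := Nat.sInf_le (Or.inl hc)
      omega
    have hlt : t - 1 < 100 * (Fintype.card V) ^ 2 := by omega
    have hviol : ¬ (violated Φ (wsState Φ ω (t - 1))).length = 0 := by
      intro h0
      apply hns
      intro c hc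
      by_contra hcs
      have hmem : c ∈ violated Φ (wsState Φ ω (t - 1)) := by
        simp [violated, List.mem_filter, hc, hcs]
      rw [List.length_eq_zero_iff] at h0
      rw [h0] at hmem
      simp at hmem
    have ht1 : t = (t - 1) + 1 := by omega
    rw [ht1]
    simp only [wsState, dif_pos hlt, wsNext, dif_neg hviol]
    exact flem _ _
  calc wsT Φ ω = ∑ _t ∈ Finset.Icc 1 (wsT Φ ω), 1 := by simp
    _ ≤ ∑ t ∈ Finset.Icc 1 (wsT Φ ω), ∑ x : V,
          (if wsState Φ ω (t - 1) x ≠ wsState Φ ω t x then 1 else 0) := by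
        apply Finset.sum_le_sum
        intro t ht
        obtain ⟨v, hv⟩ := key t ht
        calc 1 = (if wsState Φ ω (t - 1) v ≠ wsState Φ ω t v then 1 else 0) := by
                rw [if_pos hv]
          _ ≤ _ := Finset.single_le_sum
                (f := fun x : V => if wsState Φ ω (t - 1) x ≠ wsState Φ ω t x then 1 else 0)
                (fun i _ => Nat.zero_le _) (Finset.mem_univ v)
    _ = ∑ x : V, ∑ t ∈ Finset.Icc 1 (wsT Φ ω),
          (if wsState Φ ω (t - 1) x ≠ wsState Φ ω t x then 1 else 0) := Finset.sum_comm
    _ ≤ ∑ x : V, wsN Φ ω (σstar x, x) := by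
        apply Finset.sum_le_sum
        intro x _
        unfold wsN
        exact Finset.single_le_sum
          (f := fun v => ∑ t ∈ Finset.Icc 1 (wsT Φ ω),
            if wsState Φ ω (t - 1) v ≠ wsState Φ ω t v then 1 else 0)
          (fun v _ => Nat.zero_le _) (hmemx (σstar x) x)
end

section
/- There is a constant C > 0 such that the following is true. Let Φ be a satisfiable 2-CNF formula and σ* a satisfying assignment of Φ. Then for all x ∈ V(Φ), the expectation over the random choices of WalkSAT satisfies E[N(Φ, σ*(x)·x)] ≤ C · |ℒ(Φ, {σ*(x)·x})|². -/
open Filter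

open scoped Classical

section Aux

variable {V : Type} [Fintype V] [DecidableEq V]

/-- The finset of UCP variables. -/
noncomputable def finV (Φ : CNF V) (l : Lit V) : Finset V :=
  (Set.toFinite (ucpVars Φ l)).toFinset

lemma mem_finV {Φ : CNF V} {l : Lit V} {v : V} :
    v ∈ finV Φ l ↔ v ∈ ucpVars Φ l := Set.Finite.mem_toFinset _

lemma mem_ucpLits_self (Φ : CNF V) (l : Lit V) : l ∈ ucpLits Φ l := by
  intro L hL; exact hL.1

lemma ucpClosed_ucpLits (Φ : CNF V) (l : Lit V) : ucpClosed Φ (ucpLits Φ l) := by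
  intro c hc
  constructor
  · intro h L hL
    exact ((hL.2 c hc).1 (h L hL))
  · intro h L hL
    exact ((hL.2 c hc).2 (h L hL))

lemma ucpLits_sat {Φ : CNF V} {σstar : V → Bool} {l : Lit V}
    (hsat : cnfSat σstar Φ) (hl : litSat σstar l) :
    ∀ l' ∈ ucpLits Φ l, litSat σstar l' := by
  intro l' hl'
  refine hl' {l'' | litSat σstar l''} ⟨hl, ?_⟩
  intro c hc
  have hcs := hsat c hc
  constructor
  · intro h
    rcases hcs with h1 | h2
    · exfalso
      simp only [Set.mem_setOf_eq, litSat, Lit.negate] at h h1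
      rw [h1] at h; simp at h
    · exact h2
  · intro h
    rcases hcs with h1 | h2
    · exact h1
    · exfalso
      simp only [Set.mem_setOf_eq, litSat, Lit.negate] at h h2
      rw [h2] at h; simp at h

lemma mem_finV_lit {Φ : CNF V} {σstar : V → Bool} {l : Lit V}
    (hsat : cnfSat σstar Φ) (hl : litSat σstar l) {v : V} (hv : v ∈ finV Φ l) :
    (σstar v, v) ∈ ucpLits Φ l := by
  rw [mem_finV] at hv
  obtain ⟨l', hl', rfl⟩ := hv
  have : litSat σstar l' := ucpLits_sat hsat hl l' hl'
  have : l' = (σstar l'.2, l'.2) := by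
    rw [litSat] at this
    exact Prod.ext this.symm rfl
  rwa [← this]

lemma lit_var_cases (l' : Lit V) (b : Bool) (v : V) (h : l'.2 = v) :
    (b, v) = l' ∨ (b, v) = Lit.negate l' := by
  subst h
  rcases Bool.eq_or_eq_not b l'.1 with hb | hb
  · left; exact Prod.ext hb rfl
  · right; exact Prod.ext hb rfl

/-- Key structural lemma: if a violated clause has its first variable in `𝒱`, then
either that variable disagrees with `σ*`, or the second variable is in `𝒱` and disagrees. -/
lemma key_clause {Φ : CNF V} {σstar : V → Bool} {l : Lit V}
    (hsat : cnfSat σstar Φ) (hl : litSat σstar l) {σ : V → Bool} {c : Clause V}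
    (hc : c ∈ Φ) (hns : ¬ clauseSat σ c) (h1 : c.1.2 ∈ finV Φ l) :
    σ c.1.2 ≠ σstar c.1.2 ∨ (c.2.2 ∈ finV Φ l ∧ σ c.2.2 ≠ σstar c.2.2) := by
  have hL1 : (σstar c.1.2, c.1.2) ∈ ucpLits Φ l := mem_finV_lit hsat hl h1
  have hns1 : ¬ litSat σ c.1 := fun h => hns (Or.inl h)
  have hns2 : ¬ litSat σ c.2 := fun h => hns (Or.inr h)
  rcases lit_var_cases c.1 (σstar c.1.2) c.1.2 rfl with hcase | hcase
  · left
    intro h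
    apply hns1
    have : σstar c.1.2 = c.1.1 := congrArg Prod.fst hcase
    rw [litSat, h, this]
  · right
    have hneg : Lit.negate c.1 ∈ ucpLits Φ l := by rwa [← hcase]
    have h2L : c.2 ∈ ucpLits Φ l := (ucpClosed_ucpLits Φ l c hc).1 hneg
    have h2sat : litSat σstar c.2 := ucpLits_sat hsat hl _ h2L
    refine ⟨mem_finV.2 ⟨c.2, h2L, rfl⟩, ?_⟩
    intro h
    apply hns2
    rw [litSat] at h2sat ⊢
    rw [h, h2sat]

lemma key_clause' {Φ : CNF V} {σstar : V → Bool} {l : Lit V}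
    (hsat : cnfSat σstar Φ) (hl : litSat σstar l) {σ : V → Bool} {c : Clause V}
    (hc : c ∈ Φ) (hns : ¬ clauseSat σ c) (h1 : c.2.2 ∈ finV Φ l) :
    σ c.2.2 ≠ σstar c.2.2 ∨ (c.1.2 ∈ finV Φ l ∧ σ c.1.2 ≠ σstar c.1.2) := by
  have hL1 : (σstar c.2.2, c.2.2) ∈ ucpLits Φ l := mem_finV_lit hsat hl h1
  have hns1 : ¬ litSat σ c.1 := fun h => hns (Or.inl h)
  have hns2 : ¬ litSat σ c.2 := fun h => hns (Or.inr h)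
  rcases lit_var_cases c.2 (σstar c.2.2) c.2.2 rfl with hcase | hcase
  · left
    intro h
    apply hns2
    have : σstar c.2.2 = c.2.1 := congrArg Prod.fst hcase
    rw [litSat, h, this]
  · right
    have hneg : Lit.negate c.2 ∈ ucpLits Φ l := by rwa [← hcase]
    have h2L : c.1 ∈ ucpLits Φ l := (ucpClosed_ucpLits Φ l c hc).2 hneg
    have h2sat : litSat σstar c.1 := ucpLits_sat hsat hl _ h2L
    refine ⟨mem_finV.2 ⟨c.1, h2L, rfl⟩, ?_⟩
    intro h
    apply hns1
    rw [litSat] at h2sat ⊢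
    rw [h, h2sat]

/-- Number of disagreements with `σ*` on the UCP variables. -/
noncomputable def dd (Φ : CNF V) (σstar : V → Bool) (l : Lit V) (σ : V → Bool) : ℕ :=
  ((finV Φ l).filter (fun v => σ v ≠ σstar v)).card

/-- The potential function `d (2m - d)`. -/
noncomputable def phi (Φ : CNF V) (σstar : V → Bool) (l : Lit V) (σ : V → Bool) : ℝ :=
  (dd Φ σstar l σ : ℝ) * (2 * ((finV Φ l).card : ℝ) - (dd Φ σstar l σ : ℝ))

lemma dd_le (Φ : CNF V) (σstar : V → Bool) (l : Lit V) (σ : V → Bool) :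
    dd Φ σstar l σ ≤ (finV Φ l).card := Finset.card_filter_le _ _

lemma phi_nonneg (Φ : CNF V) (σstar : V → Bool) (l : Lit V) (σ : V → Bool) :
    0 ≤ phi Φ σstar l σ := by
  have h := dd_le Φ σstar l σ
  have h' : (dd Φ σstar l σ : ℝ) ≤ ((finV Φ l).card : ℝ) := by exact_mod_cast h
  have h0 : (0:ℝ) ≤ (dd Φ σstar l σ : ℝ) := Nat.cast_nonneg _
  unfold phi
  nlinarith

lemma phi_le_sq (Φ : CNF V) (σstar : V → Bool) (l : Lit V) (σ : V → Bool) :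
    phi Φ σstar l σ ≤ ((finV Φ l).card : ℝ) ^ 2 := by
  have h' : (dd Φ σstar l σ : ℝ) ≤ ((finV Φ l).card : ℝ) := by
    exact_mod_cast dd_le Φ σstar l σ
  unfold phi
  nlinarith [sq_nonneg (((finV Φ l).card : ℝ) - (dd Φ σstar l σ : ℝ))]

lemma dd_flip_not_mem {Φ : CNF V} {σstar : V → Bool} {l : Lit V} {σ : V → Bool} {u : V}
    (hu : u ∉ finV Φ l) : dd Φ σstar l (flipVar σ u) = dd Φ σstar l σ := by
  unfold dd
  congr 1
  apply Finset.filter_congr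
  intro v hv
  have hvu : v ≠ u := fun h => hu (h ▸ hv)
  simp [flipVar, hvu]

lemma dd_flip_disagree {Φ : CNF V} {σstar : V → Bool} {l : Lit V} {σ : V → Bool} {u : V}
    (hu : u ∈ finV Φ l) (hne : σ u ≠ σstar u) :
    dd Φ σstar l (flipVar σ u) + 1 = dd Φ σstar l σ := by
  unfold dd
  have hmem : u ∈ (finV Φ l).filter (fun v => σ v ≠ σstar v) :=
    Finset.mem_filter.2 ⟨hu, hne⟩
  have hset : (finV Φ l).filter (fun v => flipVar σ u v ≠ σstar v)
      = ((finV Φ l).filter (fun v => σ v ≠ σstar v)).erase u := by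
    ext v
    simp only [Finset.mem_filter, Finset.mem_erase]
    constructor
    · rintro ⟨hv, hflip⟩
      by_cases hvu : v = u
      · exfalso
        subst hvu
        simp only [flipVar, if_pos rfl] at hflip
        revert hne hflip
        cases σ v <;> cases σstar v <;> simp
      · exact ⟨hvu, hv, by simpa [flipVar, hvu] using hflip⟩
    · rintro ⟨hvu, hv, hne'⟩
      exact ⟨hv, by simpa [flipVar, hvu] using hne'⟩
  rw [hset, Finset.card_erase_of_mem hmem]
  have := Finset.card_pos.2 ⟨u, hmem⟩
  omega

lemma dd_flip_agree {Φ : CNF V} {σstar : V → Bool} {l : Lit V} {σ : V → Bool} {u : V}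
    (hu : u ∈ finV Φ l) (heq : σ u = σstar u) :
    dd Φ σstar l (flipVar σ u) = dd Φ σstar l σ + 1 := by
  unfold dd
  have hmem : u ∉ (finV Φ l).filter (fun v => σ v ≠ σstar v) := by
    simp [Finset.mem_filter, heq]
  have hset : (finV Φ l).filter (fun v => flipVar σ u v ≠ σstar v)
      = insert u ((finV Φ l).filter (fun v => σ v ≠ σstar v)) := by
    ext v
    simp only [Finset.mem_filter, Finset.mem_insert]
    constructor
    · rintro ⟨hv, hflip⟩
      by_cases hvu : v = u
      · exact Or.inl hvu
      · exact Or.inr ⟨hv, by simpa [flipVar, hvu] using hflip⟩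
    · rintro (hvu | ⟨hv, hne'⟩)
      · subst hvu
        refine ⟨hu, ?_⟩
        simp only [flipVar, if_pos rfl]
        revert heq
        cases σ v <;> cases σstar v <;> simp
      · by_cases hvu : v = u
        · subst hvu; exact absurd heq hne'
        · exact ⟨hv, by simpa [flipVar, hvu] using hne'⟩
  rw [hset, Finset.card_insert_of_notMem hmem]

lemma ind_flip (Φ : CNF V) (l : Lit V) (σ : V → Bool) (u : V) :
    (∑ v ∈ finV Φ l, if σ v ≠ flipVar σ u v then (1:ℝ) else 0)
      = if u ∈ finV Φ l then 1 else 0 := by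
  have hiff : ∀ v, (σ v ≠ flipVar σ u v) ↔ v = u := by
    intro v
    by_cases hvu : v = u
    · subst hvu
      simp only [flipVar, if_pos rfl]
      cases σ v <;> simp
    · simp [flipVar, hvu]
  calc (∑ v ∈ finV Φ l, if σ v ≠ flipVar σ u v then (1:ℝ) else 0)
      = ∑ v ∈ finV Φ l, if v = u then (1:ℝ) else 0 := by
        apply Finset.sum_congr rfl
        intro v _
        simp [hiff v]
    _ = if u ∈ finV Φ l then 1 else 0 := Finset.sum_ite_eq' _ _ _

end Aux
section Aux2

variable {V : Type} [Fintype V] [DecidableEq V]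

/-- Per-clause averaged potential drop. -/
lemma clause_step {Φ : CNF V} {σstar : V → Bool} {l : Lit V}
    (hsat : cnfSat σstar Φ) (hl : litSat σstar l) {σ : V → Bool} {c : Clause V}
    (hc : c ∈ Φ) (hns : ¬ clauseSat σ c) :
    phi Φ σstar l (flipVar σ c.1.2) + (if c.1.2 ∈ finV Φ l then (1:ℝ) else 0)
      + (phi Φ σstar l (flipVar σ c.2.2) + (if c.2.2 ∈ finV Φ l then (1:ℝ) else 0))
      ≤ 2 * phi Φ σstar l σ := by
  set M : ℝ := ((finV Φ l).card : ℝ) with hM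
  set D : ℝ := ((dd Φ σstar l σ : ℕ) : ℝ) with hD
  have hDM : D ≤ M := by rw [hD, hM]; exact_mod_cast dd_le Φ σstar l σ
  have hD0 : (0:ℝ) ≤ D := Nat.cast_nonneg _
  -- helper facts for each flip
  have flip_eq : ∀ u : V, u ∈ finV Φ l →
      ((σ u ≠ σstar u ∧ (dd Φ σstar l (flipVar σ u) : ℝ) = D - 1 ∧ 1 ≤ D)
        ∨ (σ u = σstar u ∧ (dd Φ σstar l (flipVar σ u) : ℝ) = D + 1)) := by
    intro u hu
    by_cases h : σ u = σstar u
    · right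
      refine ⟨h, ?_⟩
      rw [dd_flip_agree hu h]
      push_cast
      rfl
    · left
      have hdd := dd_flip_disagree hu h
      have h1 : 1 ≤ dd Φ σstar l σ := by omega
      refine ⟨h, ?_, by rw [hD]; exact_mod_cast h1⟩
      have : ((dd Φ σstar l (flipVar σ u) + 1 : ℕ) : ℝ) = D := by rw [hdd]
      push_cast at this
      linarith
  unfold phi
  by_cases h1 : c.1.2 ∈ finV Φ l
  · by_cases h2 : c.2.2 ∈ finV Φ l
    · -- both variables in 𝒱; at least one disagrees
      rcases flip_eq c.1.2 h1 with ⟨hne1, he1, hD1⟩ | ⟨heq1, he1⟩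
      · rcases flip_eq c.2.2 h2 with ⟨_, he2, _⟩ | ⟨_, he2⟩
        · rw [he1, he2, if_pos h1, if_pos h2]; nlinarith
        · rw [he1, he2, if_pos h1, if_pos h2]; nlinarith
      · rcases flip_eq c.2.2 h2 with ⟨_, he2, hD2⟩ | ⟨heq2, he2⟩
        · rw [he1, he2, if_pos h1, if_pos h2]; nlinarith
        · -- both agree: contradiction with key_clause
          exfalso
          rcases key_clause hsat hl hc hns h1 with h | ⟨_, h⟩
          · exact h heq1
          · exact h heq2
    · -- only first variable in 𝒱: it must disagree
      have hne1 : σ c.1.2 ≠ σstar c.1.2 := by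
        rcases key_clause hsat hl hc hns h1 with h | ⟨h, _⟩
        · exact h
        · exact absurd h h2
      rcases flip_eq c.1.2 h1 with ⟨_, he1, hD1⟩ | ⟨heq1, _⟩
      · rw [he1, dd_flip_not_mem h2, if_pos h1, if_neg h2]; nlinarith
      · exact absurd heq1 hne1
  · by_cases h2 : c.2.2 ∈ finV Φ l
    · have hne2 : σ c.2.2 ≠ σstar c.2.2 := by
        rcases key_clause' hsat hl hc hns h2 with h | ⟨h, _⟩
        · exact h
        · exact absurd h h1
      rcases flip_eq c.2.2 h2 with ⟨_, he2, hD2⟩ | ⟨heq2, _⟩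
      · rw [he2, dd_flip_not_mem h1, if_neg h1, if_pos h2]; nlinarith
      · exact absurd heq2 hne2
    · rw [dd_flip_not_mem h1, dd_flip_not_mem h2, if_neg h1, if_neg h2]
      linarith

end Aux2
section Aux3

variable {V : Type} [Fintype V] [DecidableEq V]

/-- One-step expectation over the seed pair, conditional on the current state. -/
lemma step_exp {Φ : CNF V} {σstar : V → Bool} {l : Lit V}
    (hsat : cnfSat σstar Φ) (hl : litSat σstar l) (σ : V → Bool) :
    ∑ s : Fin (Nat.factorial Φ.length) × Bool,
      (phi Φ σstar l (wsNext Φ ((s.1 : ℕ), s.2) σ)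
        + ∑ v ∈ finV Φ l, if σ v ≠ wsNext Φ ((s.1 : ℕ), s.2) σ v then (1:ℝ) else 0)
      ≤ (Fintype.card (Fin (Nat.factorial Φ.length) × Bool) : ℝ) * phi Φ σstar l σ := by
  by_cases h : (violated Φ σ).length = 0
  · have hnext : ∀ s : ℕ × Bool, wsNext Φ s σ = σ := by
      intro s; unfold wsNext; rw [dif_pos h]
    have : ∀ s : Fin (Nat.factorial Φ.length) × Bool,
        (phi Φ σstar l (wsNext Φ ((s.1 : ℕ), s.2) σ)
          + ∑ v ∈ finV Φ l, if σ v ≠ wsNext Φ ((s.1 : ℕ), s.2) σ v then (1:ℝ) else 0)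
        = phi Φ σstar l σ := by
      intro s
      rw [hnext]
      simp
    rw [Finset.sum_congr rfl (fun s _ => this s), Finset.sum_const]
    simp [Finset.card_univ]
  · -- some clause is violated
    have key : ∀ k : Fin (Nat.factorial Φ.length),
        ∑ b : Bool,
          (phi Φ σstar l (wsNext Φ ((k : ℕ), b) σ)
            + ∑ v ∈ finV Φ l, if σ v ≠ wsNext Φ ((k : ℕ), b) σ v then (1:ℝ) else 0)
          ≤ 2 * phi Φ σstar l σ := by
      intro k
      set c : Clause V := (violated Φ σ).get
        ⟨(k : ℕ) % (violated Φ σ).length, Nat.mod_lt _ (Nat.pos_of_ne_zero h)⟩ with hcdef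
      have hcviol : c ∈ violated Φ σ := List.get_mem _ _
      have hcΦ : c ∈ Φ := (List.mem_filter.1 hcviol).1
      have hcns : ¬ clauseSat σ c := by
        have := (List.mem_filter.1 hcviol).2
        simpa using this
      have hnext : ∀ b : Bool, wsNext Φ ((k : ℕ), b) σ
          = flipVar σ (if b then c.1.2 else c.2.2) := by
        intro b
        unfold wsNext
        rw [dif_neg h]
      rw [Fintype.sum_bool]
      rw [hnext true, hnext false]
      simp only [if_pos, if_neg, Bool.false_eq_true, not_false_iff, ite_true, ite_false]
      rw [ind_flip Φ l σ c.1.2, ind_flip Φ l σ c.2.2]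
      exact clause_step hsat hl hcΦ hcns
    calc ∑ s : Fin (Nat.factorial Φ.length) × Bool,
        (phi Φ σstar l (wsNext Φ ((s.1 : ℕ), s.2) σ)
          + ∑ v ∈ finV Φ l, if σ v ≠ wsNext Φ ((s.1 : ℕ), s.2) σ v then (1:ℝ) else 0)
        = ∑ k : Fin (Nat.factorial Φ.length), ∑ b : Bool,
          (phi Φ σstar l (wsNext Φ ((k : ℕ), b) σ)
            + ∑ v ∈ finV Φ l, if σ v ≠ wsNext Φ ((k : ℕ), b) σ v then (1:ℝ) else 0) :=
          Fintype.sum_prod_type _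
      _ ≤ ∑ _k : Fin (Nat.factorial Φ.length), 2 * phi Φ σstar l σ :=
          Finset.sum_le_sum (fun k _ => key k)
      _ = (Fintype.card (Fin (Nat.factorial Φ.length) × Bool) : ℝ) * phi Φ σstar l σ := by
          rw [Finset.sum_const, Finset.card_univ]
          simp [Fintype.card_prod]
          ring

/-- Summing over all seeds with one coordinate resampled. -/
lemma sum_update_eq {ι S : Type} [Fintype ι] [DecidableEq ι] [Fintype S]
    (F : (ι → S) → ℝ) (i : ι) :
    ∑ ω : ι → S, ∑ s : S, F (Function.update ω i s)
      = (Fintype.card S : ℝ) * ∑ ω : ι → S, F ω := by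
  let e : ((ι → S) × S) ≃ ((ι → S) × S) :=
    { toFun := fun p => (Function.update p.1 i p.2, p.1 i)
      invFun := fun p => (Function.update p.1 i p.2, p.1 i)
      left_inv := by
        intro p
        simp [Function.update_idem, Function.update_eq_self]
      right_inv := by
        intro p
        simp [Function.update_idem, Function.update_eq_self] }
  have h1 : ∑ ω : ι → S, ∑ s : S, F (Function.update ω i s)
      = ∑ p : (ι → S) × S, F (Function.update p.1 i p.2) :=
    by rw [Fintype.sum_prod_type]
  have h2 : ∑ p : (ι → S) × S, F (Function.update p.1 i p.2)
      = ∑ p : (ι → S) × S, F ((e p).1) := rfl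
  rw [h1, h2, Equiv.sum_comp e (fun p => F p.1)]
  rw [Fintype.sum_prod_type]
  simp [Finset.sum_const, Finset.card_univ, mul_comm]
  rw [Finset.mul_sum]
  apply Finset.sum_congr rfl
  intro ω _
  rw [mul_comm]

/-- `wsState` at time `t` does not depend on seed coordinates `≥ t`. -/
lemma wsState_update (Φ : CNF V) (ω : wsSeedSpace V Φ)
    (i : Fin (100 * (Fintype.card V) ^ 2)) (s : Fin (Nat.factorial Φ.length) × Bool) :
    ∀ t, t ≤ (i : ℕ) → wsState Φ (Function.update ω i s) t = wsState Φ ω t := by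
  intro t
  induction t with
  | zero => intro _; rfl
  | succ t ih =>
    intro ht
    have ht' : t ≤ (i : ℕ) := Nat.le_of_succ_le ht
    unfold wsState
    by_cases hcap : t < 100 * (Fintype.card V) ^ 2
    · rw [dif_pos hcap, dif_pos hcap, ih ht']
      have hne : (⟨t, hcap⟩ : Fin (100 * (Fintype.card V) ^ 2)) ≠ i := by
        intro hcontra
        have : t = (i : ℕ) := by rw [← hcontra]
        omega
      rw [Function.update_of_ne hne]
    · rw [dif_neg hcap, dif_neg hcap, ih ht']

end Aux3
section Aux4

variable {V : Type} [Fintype V] [DecidableEq V]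

/-- The recurrence for `wsState` below the cap. -/
lemma wsState_succ (Φ : CNF V) (ω : wsSeedSpace V Φ) (t : ℕ)
    (h : t < 100 * (Fintype.card V) ^ 2) :
    wsState Φ ω (t + 1)
      = wsNext Φ (((ω ⟨t, h⟩).1 : ℕ), (ω ⟨t, h⟩).2) (wsState Φ ω t) := by
  rw [wsState, dif_pos h]

/-- One-step expectation inequality for the full seed space. -/
lemma step_sum {Φ : CNF V} {σstar : V → Bool} {l : Lit V}
    (hsat : cnfSat σstar Φ) (hl : litSat σstar l) (t : ℕ)
    (ht : t < 100 * (Fintype.card V) ^ 2) :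
    ∑ ω : wsSeedSpace V Φ,
      (phi Φ σstar l (wsState Φ ω (t + 1))
        + ∑ v ∈ finV Φ l, if wsState Φ ω t v ≠ wsState Φ ω (t + 1) v then (1:ℝ) else 0)
      ≤ ∑ ω : wsSeedSpace V Φ, phi Φ σstar l (wsState Φ ω t) := by
  set S := Fin (Nat.factorial Φ.length) × Bool with hS
  set i : Fin (100 * (Fintype.card V) ^ 2) := ⟨t, ht⟩ with hi
  set F : wsSeedSpace V Φ → ℝ := fun ω =>
    phi Φ σstar l (wsState Φ ω (t + 1))
      + ∑ v ∈ finV Φ l, if wsState Φ ω t v ≠ wsState Φ ω (t + 1) v then (1:ℝ) else 0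
    with hF
  have hcard : (0:ℝ) < (Fintype.card S : ℝ) := by
    have hne : Nonempty S := ⟨(⟨0, Nat.factorial_pos _⟩, true)⟩
    have : 0 < Fintype.card S := Fintype.card_pos
    exact_mod_cast this
  have hstate : ∀ (ω : wsSeedSpace V Φ) (s : S),
      wsState Φ (Function.update ω i s) (t + 1)
        = wsNext Φ ((s.1 : ℕ), s.2) (wsState Φ ω t) := by
    intro ω s
    rw [wsState_succ Φ (Function.update ω i s) t ht]
    have h1 : (⟨t, ht⟩ : Fin (100 * (Fintype.card V) ^ 2)) = i := rfl
    rw [h1, Function.update_self, wsState_update Φ ω i s t (le_refl _)]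
  have hkey : ∀ ω : wsSeedSpace V Φ, ∑ s : S, F (Function.update ω i s)
      ≤ (Fintype.card S : ℝ) * phi Φ σstar l (wsState Φ ω t) := by
    intro ω
    have : ∀ s : S, F (Function.update ω i s)
        = phi Φ σstar l (wsNext Φ ((s.1 : ℕ), s.2) (wsState Φ ω t))
          + ∑ v ∈ finV Φ l,
              if wsState Φ ω t v ≠ wsNext Φ ((s.1 : ℕ), s.2) (wsState Φ ω t) v
              then (1:ℝ) else 0 := by
      intro s
      rw [hF]
      simp only
      rw [hstate ω s, wsState_update Φ ω i s t (le_refl _)]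
    rw [Finset.sum_congr rfl (fun s _ => this s)]
    exact step_exp hsat hl (wsState Φ ω t)
  have hmul : (Fintype.card S : ℝ) * ∑ ω : wsSeedSpace V Φ, F ω
      ≤ (Fintype.card S : ℝ) * ∑ ω : wsSeedSpace V Φ, phi Φ σstar l (wsState Φ ω t) := by
    rw [← sum_update_eq F i]
    calc ∑ ω : wsSeedSpace V Φ, ∑ s : S, F (Function.update ω i s)
        ≤ ∑ ω : wsSeedSpace V Φ, (Fintype.card S : ℝ) * phi Φ σstar l (wsState Φ ω t) :=
          Finset.sum_le_sum (fun ω _ => hkey ω)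
      _ = (Fintype.card S : ℝ) * ∑ ω : wsSeedSpace V Φ, phi Φ σstar l (wsState Φ ω t) := by
          rw [Finset.mul_sum]
  exact le_of_mul_le_mul_left hmul hcard

end Aux4

/-- **Proposition 2.5.** There is a constant `C > 0` such that for every satisfiable 2-CNF `Φ`
with satisfying assignment `σ*` and every variable `x`, the expectation over the random choices
of WalkSAT satisfies `E[N(Φ, σ*(x)·x)] ≤ C · |ℒ(Φ, {σ*(x)·x})|²`. -/
theorem stmt_5 :
    ∃ C : ℝ, 0 < C ∧
      ∀ (V : Type) [Fintype V] [DecidableEq V] (Φ : CNF V), validCNF Φ →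
        ∀ σstar : V → Bool, cnfSat σstar Φ →
          ∀ x : V,
            wsExp Φ (fun ω => (wsN Φ ω (σstar x, x) : ℝ)) ≤
              C * ((ucpLits Φ (σstar x, x)).ncard : ℝ) ^ 2 := by
  refine ⟨1, one_pos, ?_⟩
  intro V _ _ Φ _hval σstar hsat x
  set l : Lit V := (σstar x, x) with hldef
  have hl : litSat σstar l := rfl
  set cap := 100 * (Fintype.card V) ^ 2 with hcap
  set M : ℝ := ((finV Φ l).card : ℝ) with hM
  have hM0 : (0:ℝ) ≤ M := Nat.cast_nonneg _
  -- the expectation numerator bound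
  have hTle : ∀ ω : wsSeedSpace V Φ, wsT Φ ω ≤ cap := by
    intro ω
    apply Nat.sInf_le
    right
    rfl
  -- pointwise: wsN is at most the sum of per-step indicators up to the cap
  have hptwise : ∀ ω : wsSeedSpace V Φ, (wsN Φ ω l : ℝ)
      ≤ ∑ t ∈ Finset.Icc 1 cap, ∑ v ∈ finV Φ l,
          if wsState Φ ω (t - 1) v ≠ wsState Φ ω t v then (1:ℝ) else 0 := by
    intro ω
    have h1 : (wsN Φ ω l : ℝ)
        = ∑ v ∈ finV Φ l, ∑ t ∈ Finset.Icc 1 (wsT Φ ω),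
            if wsState Φ ω (t - 1) v ≠ wsState Φ ω t v then (1:ℝ) else 0 := by
      rw [wsN]
      push_cast
      rfl
    rw [h1, Finset.sum_comm]
    apply Finset.sum_le_sum_of_subset_of_nonneg
    · exact Finset.Icc_subset_Icc_right (hTle ω)
    · intro t _ _
      apply Finset.sum_nonneg
      intro v _
      positivity
  -- telescoping bound on the summed indicators
  set Ψ : ℕ → ℝ := fun t => ∑ ω : wsSeedSpace V Φ, phi Φ σstar l (wsState Φ ω t) with hΨ
  have hstep : ∀ i ∈ Finset.range cap,
      ∑ ω : wsSeedSpace V Φ, (∑ v ∈ finV Φ l,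
          if wsState Φ ω i v ≠ wsState Φ ω (i + 1) v then (1:ℝ) else 0)
        ≤ Ψ i - Ψ (i + 1) := by
    intro i hi
    have hi' : i < cap := Finset.mem_range.1 hi
    have := step_sum hsat hl i hi'
    rw [Finset.sum_add_distrib] at this
    rw [hΨ]
    simp only
    linarith
  have hsum : ∑ ω : wsSeedSpace V Φ, ∑ t ∈ Finset.Icc 1 cap, ∑ v ∈ finV Φ l,
      (if wsState Φ ω (t - 1) v ≠ wsState Φ ω t v then (1:ℝ) else 0)
      ≤ (Fintype.card (wsSeedSpace V Φ) : ℝ) * M ^ 2 := by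
    rw [Finset.sum_comm]
    have hIcc : ∀ (g : ℕ → ℝ), ∑ t ∈ Finset.Icc 1 cap, g t
        = ∑ i ∈ Finset.range cap, g (1 + i) := by
      intro g
      rw [← Finset.Ico_add_one_right_eq_Icc, Finset.sum_Ico_eq_sum_range]
      simp
    rw [hIcc]
    have hre : ∀ i ∈ Finset.range cap,
        (∑ ω : wsSeedSpace V Φ, ∑ v ∈ finV Φ l,
          if wsState Φ ω (1 + i - 1) v ≠ wsState Φ ω (1 + i) v then (1:ℝ) else 0)
        = ∑ ω : wsSeedSpace V Φ, ∑ v ∈ finV Φ l,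
          if wsState Φ ω i v ≠ wsState Φ ω (i + 1) v then (1:ℝ) else 0 := by
      intro i _
      have e1 : 1 + i - 1 = i := by omega
      have e2 : 1 + i = i + 1 := by omega
      rw [e1, e2]
    calc ∑ i ∈ Finset.range cap, ∑ ω : wsSeedSpace V Φ, ∑ v ∈ finV Φ l,
          (if wsState Φ ω (1 + i - 1) v ≠ wsState Φ ω (1 + i) v then (1:ℝ) else 0)
        = ∑ i ∈ Finset.range cap, ∑ ω : wsSeedSpace V Φ, ∑ v ∈ finV Φ l,
          (if wsState Φ ω i v ≠ wsState Φ ω (i + 1) v then (1:ℝ) else 0) :=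
          Finset.sum_congr rfl hre
      _ ≤ ∑ i ∈ Finset.range cap, (Ψ i - Ψ (i + 1)) := Finset.sum_le_sum hstep
      _ = Ψ 0 - Ψ cap := Finset.sum_range_sub' Ψ cap
      _ ≤ Ψ 0 := by
          have : 0 ≤ Ψ cap := Finset.sum_nonneg (fun ω _ => phi_nonneg Φ σstar l _)
          linarith
      _ ≤ (Fintype.card (wsSeedSpace V Φ) : ℝ) * M ^ 2 := by
          rw [hΨ]
          calc ∑ ω : wsSeedSpace V Φ, phi Φ σstar l (wsState Φ ω 0)
              ≤ ∑ _ω : wsSeedSpace V Φ, M ^ 2 :=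
                Finset.sum_le_sum (fun ω _ => phi_le_sq Φ σstar l _)
            _ = (Fintype.card (wsSeedSpace V Φ) : ℝ) * M ^ 2 := by
                rw [Finset.sum_const, Finset.card_univ, nsmul_eq_mul]
  -- combine
  have hcardpos : (0:ℝ) < (Fintype.card (wsSeedSpace V Φ) : ℝ) := by
    have : Nonempty (wsSeedSpace V Φ) :=
      ⟨fun _ => (⟨0, Nat.factorial_pos _⟩, true)⟩
    have := Fintype.card_pos (α := wsSeedSpace V Φ)
    exact_mod_cast this
  have hnum : ∑ ω : wsSeedSpace V Φ, (wsN Φ ω l : ℝ)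
      ≤ (Fintype.card (wsSeedSpace V Φ) : ℝ) * M ^ 2 :=
    le_trans (Finset.sum_le_sum (fun ω _ => hptwise ω)) hsum
  have hexp : wsExp Φ (fun ω => (wsN Φ ω l : ℝ)) ≤ M ^ 2 := by
    rw [wsExp]
    rw [div_le_iff₀ hcardpos]
    calc ∑ ω : wsSeedSpace V Φ, (wsN Φ ω l : ℝ)
        ≤ (Fintype.card (wsSeedSpace V Φ) : ℝ) * M ^ 2 := hnum
      _ = M ^ 2 * (Fintype.card (wsSeedSpace V Φ) : ℝ) := mul_comm _ _
  -- M ≤ ncard of ucpLits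
  have hML : M ≤ ((ucpLits Φ l).ncard : ℝ) := by
    have h1 : (finV Φ l).card = (ucpVars Φ l).ncard :=
      (Set.ncard_eq_toFinset_card _ _).symm
    have h2 : (ucpVars Φ l).ncard ≤ (ucpLits Φ l).ncard := by
      rw [ucpVars]
      exact Set.ncard_image_le (Set.toFinite _)
    rw [hM, h1]
    exact_mod_cast h2
  calc wsExp Φ (fun ω => (wsN Φ ω l : ℝ)) ≤ M ^ 2 := hexp
    _ ≤ ((ucpLits Φ l).ncard : ℝ) ^ 2 := by
        apply pow_le_pow_left₀ hM0 hML
    _ = 1 * ((ucpLits Φ l).ncard : ℝ) ^ 2 := (one_mul _).symm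
end

section
/- Let G(n,M) be the uniform Erdős–Rényi random graph with n vertices and M = M(n) ~ 0.15 n edges. Then, for sufficiently large n, Σ_{v ∈ V(G(n,M))} E[|C(v)|²] ≤ 5n, where C(v) denotes the connected component of vertex v. -/
open Filter

open scoped Classical

/-- The sample space of the Erdős–Rényi random graph `G(n, M)`: all sets of exactly `M` edges
(non-loops) on the vertex set `Fin n`; the random graph is uniform on this set. -/
noncomputable def edgeSets (n M : ℕ) : Finset (Finset (Sym2 (Fin n))) :=
  Finset.univ.filter fun E => E.card = M ∧ ∀ e ∈ E, ¬ e.IsDiag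

/-- `|C(v)|`: the number of vertices of the connected component of `v` in the graph with edge
set `E`. -/
noncomputable def compSize {n : ℕ} (E : Finset (Sym2 (Fin n))) (v : Fin n) : ℕ :=
  {u | (SimpleGraph.fromEdgeSet (E : Set (Sym2 (Fin n)))).Reachable u v}.ncard

namespace ER

noncomputable def Dset (n : ℕ) : Finset (Sym2 (Fin n)) :=
  Finset.univ.filter fun e => ¬ e.IsDiag

lemma card_Dset (n : ℕ) : (Dset n).card = n.choose 2 := by
  have h1 : Dset n = (⊤ : SimpleGraph (Fin n)).edgeFinset := by
    rw [SimpleGraph.edgeFinset_top]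
    ext e; simp [Dset]
  rw [h1, SimpleGraph.card_edgeFinset_top_eq_card_choose_two, Fintype.card_fin]

lemma edgeSets_eq (n M : ℕ) : edgeSets n M = (Dset n).powersetCard M := by
  ext E
  simp only [edgeSets, Finset.mem_filter, Finset.mem_univ, true_and,
    Finset.mem_powersetCard, Dset]
  constructor
  · rintro ⟨h1, h2⟩
    exact ⟨fun e he => by simp [h2 e he], h1⟩
  · rintro ⟨h1, h2⟩
    refine ⟨h2, fun e he => ?_⟩
    have := h1 he; simp at this; exact this

lemma card_edgeSets (n M : ℕ) : (edgeSets n M).card = (Dset n).card.choose M := by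
  rw [edgeSets_eq, Finset.card_powersetCard]

lemma card_filter_sup {n M : ℕ} (S : Finset (Sym2 (Fin n))) (hS : S ⊆ Dset n)
    (hk : S.card ≤ M) :
    ((edgeSets n M).filter (fun E => S ⊆ E)).card
      = ((Dset n).card - S.card).choose (M - S.card) := by
  rw [show ((Dset n).card - S.card).choose (M - S.card) = ((Dset n) \ S).card.choose (M - S.card) by rw [Finset.card_sdiff_of_subset hS], ← Finset.card_powersetCard]
  apply Finset.card_bij' (fun E _ => E \ S) (fun F _ => F ∪ S)
  · intro E hE
    simp only [Finset.mem_filter, edgeSets_eq, Finset.mem_powersetCard] at hE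
    obtain ⟨⟨hsub, hcard⟩, hSE⟩ := hE
    simp only [Finset.mem_powersetCard]
    constructor
    · exact Finset.sdiff_subset_sdiff hsub (le_refl S)
    · rw [Finset.card_sdiff_of_subset hSE, hcard]
  · intro F hF
    simp only [Finset.mem_powersetCard] at hF
    obtain ⟨hsub, hcard⟩ := hF
    have hdisj : Disjoint F S := by
      intro t htF htS x hx
      have h1 := hsub (htF hx)
      simp only [Finset.mem_sdiff] at h1
      exact absurd (htS hx) h1.2
    simp only [Finset.mem_filter, edgeSets_eq, Finset.mem_powersetCard]
    refine ⟨⟨Finset.union_subset (fun e he => (Finset.mem_sdiff.mp (hsub he)).1) hS, ?_⟩, Finset.subset_union_right⟩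
    · rw [Finset.card_union_of_disjoint hdisj, hcard]
      omega
  · intro E hE
    simp only [Finset.mem_filter] at hE
    exact Finset.sdiff_union_of_subset hE.2
  · intro F hF
    simp only [Finset.mem_powersetCard] at hF
    have hdisj : Disjoint F S := by
      intro t htF htS x hx
      have h1 := hF.1 (htF hx)
      simp only [Finset.mem_sdiff] at h1
      exact absurd (htS hx) h1.2
    exact Finset.union_sdiff_cancel_right hdisj

lemma descFactorial_mul_pow_le {N : ℕ} (M : ℕ) (hMN : M ≤ N) :
    ∀ k, M.descFactorial k * N ^ k ≤ M ^ k * N.descFactorial k := by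
  intro k
  induction k with
  | zero => simp
  | succ k ih =>
    rw [Nat.descFactorial_succ, Nat.descFactorial_succ, pow_succ, pow_succ]
    calc (M - k) * M.descFactorial k * (N ^ k * N)
        = ((M - k) * N) * (M.descFactorial k * N ^ k) := by ring
      _ ≤ (M * (N - k)) * (M ^ k * N.descFactorial k) := by
          apply Nat.mul_le_mul _ ih
          rcases le_or_gt k M with h | h
          · calc (M - k) * N = M * N - k * N := by rw [Nat.sub_mul]
              _ ≤ M * N - k * M := by
                  apply Nat.sub_le_sub_left
                  exact Nat.mul_le_mul_left k hMN
              _ = M * (N - k) := by rw [Nat.mul_sub, Nat.mul_comm k M] 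
          · simp [Nat.sub_eq_zero_of_le h.le]
      _ = M ^ k * M * ((N - k) * N.descFactorial k) := by ring

lemma choose_pow_le {N M k : ℕ} (hMN : M ≤ N) :
    M.choose k * N ^ k ≤ M ^ k * N.choose k := by
  have h := descFactorial_mul_pow_le M hMN k
  rw [Nat.descFactorial_eq_factorial_mul_choose, Nat.descFactorial_eq_factorial_mul_choose] at h
  have hfac : 0 < k.factorial := Nat.factorial_pos k
  apply Nat.le_of_mul_le_mul_left _ hfac
  calc k.factorial * (M.choose k * N ^ k) = k.factorial * M.choose k * N ^ k := by ring
    _ ≤ M ^ k * (k.factorial * N.choose k) := by linarith [h]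
    _ = k.factorial * (M ^ k * N.choose k) := by ring

lemma prob_bound {n M : ℕ} (S : Finset (Sym2 (Fin n))) (hS : ∀ e ∈ S, ¬ e.IsDiag)
    (hMN : M ≤ (Dset n).card) :
    ((edgeSets n M).filter (fun E => S ⊆ E)).card * (Dset n).card ^ S.card
      ≤ (edgeSets n M).card * M ^ S.card := by
  set N := (Dset n).card with hN
  set k := S.card with hk
  have hSD : S ⊆ Dset n := fun e he => by
    simp only [Dset, Finset.mem_filter, Finset.mem_univ, true_and]; exact hS e he
  have hkN : k ≤ N := hk ▸ Finset.card_le_card hSD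
  rcases le_or_gt k M with hkM | hkM
  · rw [card_filter_sup S hSD hkM, card_edgeSets, ← hN, ← hk]
    -- goal : (N - k).choose (M - k) * N ^ k ≤ N.choose M * M ^ k
    have hid := Nat.choose_mul (n := N) hkM  -- N.choose M * M.choose k = N.choose k * (N-k).choose (M-k)
    have hpos : 0 < N.choose k := Nat.choose_pos hkN
    apply Nat.le_of_mul_le_mul_left _ hpos
    calc N.choose k * ((N - k).choose (M - k) * N ^ k)
        = (N.choose M * M.choose k) * N ^ k := by rw [hid]; ring
      _ = N.choose M * (M.choose k * N ^ k) := by ring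
      _ ≤ N.choose M * (M ^ k * N.choose k) := by
          exact Nat.mul_le_mul_left _ (choose_pow_le hMN)
      _ = N.choose k * (N.choose M * M ^ k) := by ring
  · have : (edgeSets n M).filter (fun E => S ⊆ E) = ∅ := by
      apply Finset.filter_false_of_mem
      intro E hE hSE
      simp only [edgeSets, Finset.mem_filter] at hE
      have := Finset.card_le_card hSE
      omega
    rw [this]
    simp



/-- Witness data of shape `(a, b)`: a path of `a+1` vertices, an attach index, and
`b` extra vertices for the second path. -/
abbrev Wit (n a b : ℕ) := (Fin (a+1) → Fin n) × Fin (a+1) × (Fin b → Fin n)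

/-- The extended second path: `g` followed by `f j`. -/
noncomputable def pe {n a b : ℕ} (θ : Wit n a b) : Fin (b+1) → Fin n :=
  fun i => if h : (i : ℕ) < b then θ.2.2 ⟨i, h⟩ else θ.1 θ.2.1

noncomputable def edgesOf {n k : ℕ} (h : Fin (k+1) → Fin n) : Finset (Sym2 (Fin n)) :=
  Finset.univ.image fun i : Fin k => s(h i.castSucc, h i.succ)

noncomputable def WS {n a b : ℕ} (θ : Wit n a b) : Finset (Sym2 (Fin n)) :=
  edgesOf θ.1 ∪ edgesOf (pe θ)

def Good {n a b : ℕ} (θ : Wit n a b) : Prop :=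
  Function.Injective θ.1 ∧ Function.Injective θ.2.2 ∧ ∀ i, θ.2.2 i ∉ Set.range θ.1

lemma pe_inj {n a b : ℕ} {θ : Wit n a b} (hθ : Good θ) : Function.Injective (pe θ) := by
  obtain ⟨hf, hg, hgf⟩ := hθ
  intro i j hij
  unfold pe at hij
  by_cases hi : (i : ℕ) < b <;> by_cases hj : (j : ℕ) < b <;>
    simp only [hi, hj, dif_pos, dif_neg, not_false_iff] at hij
  · have := hg hij
    apply Fin.ext
    simpa [Fin.ext_iff] using this
  · exact absurd ⟨θ.2.1, hij.symm⟩ (hgf _)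
  · exact absurd ⟨θ.2.1, hij⟩ (hgf _)
  · apply Fin.ext; omega

lemma edgesOf_card {n k : ℕ} {h : Fin (k+1) → Fin n} (hinj : Function.Injective h) :
    (edgesOf h).card = k := by
  rw [edgesOf, Finset.card_image_of_injective _ ?_, Finset.card_univ, Fintype.card_fin]
  intro i j hij
  rw [Sym2.eq_iff] at hij
  rcases hij with ⟨h1, _⟩ | ⟨h1, h2⟩
  · have := hinj h1
    apply Fin.ext; simpa [Fin.ext_iff] using this
  · have e1 := hinj h1; have e2 := hinj h2
    apply Fin.ext
    simp only [Fin.ext_iff, Fin.coe_castSucc, Fin.val_succ] at e1 e2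
    omega

lemma mem_edgesOf {n k : ℕ} {h : Fin (k+1) → Fin n} {e : Sym2 (Fin n)} :
    e ∈ edgesOf h ↔ ∃ i : Fin k, e = s(h i.castSucc, h i.succ) := by
  simp [edgesOf, eq_comm]

lemma WS_card {n a b : ℕ} {θ : Wit n a b} (hθ : Good θ) : (WS θ).card = a + b := by
  obtain ⟨hf, hg, hgf⟩ := hθ
  rw [WS, Finset.card_union_of_disjoint, edgesOf_card hf, edgesOf_card (pe_inj ⟨hf, hg, hgf⟩)]
  rw [Finset.disjoint_left]
  intro e he1 he2
  rw [mem_edgesOf] at he1 he2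
  obtain ⟨i, hi⟩ := he1
  obtain ⟨d, hd⟩ := he2
  have hped : pe θ d.castSucc = θ.2.2 ⟨d, d.isLt⟩ := by
    rw [pe]; simp only [Fin.coe_castSucc]; rw [dif_pos d.isLt]
  rw [hi] at hd
  rw [Sym2.eq_iff] at hd
  rcases hd with ⟨h1, _⟩ | ⟨_, h2⟩
  · exact absurd ⟨i.castSucc, by rw [h1, hped]⟩ (hgf _)
  · exact absurd ⟨i.succ, by rw [h2, hped]⟩ (hgf _)

lemma WS_nondiag {n a b : ℕ} {θ : Wit n a b} (hθ : Good θ) :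
    ∀ e ∈ WS θ, ¬ e.IsDiag := by
  intro e he
  rw [WS, Finset.mem_union] at he
  rcases he with he | he <;> rw [mem_edgesOf] at he <;> obtain ⟨i, hi⟩ := he <;>
    subst hi <;> rw [Sym2.mk_isDiag_iff]
  · intro h
    have := hθ.1 h
    simp [Fin.ext_iff] at this
  · intro h
    have := pe_inj hθ h
    simp [Fin.ext_iff] at this

section Walks

variable {α : Type*} {G : SimpleGraph α}

lemma getVert_eq_support_getElem {u v : α} (p : G.Walk u v) :
    ∀ (i : ℕ) (h : i < p.support.length), p.getVert i = p.support[i] := by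
  induction p with
  | nil =>
    intro i h
    simp only [SimpleGraph.Walk.support_nil, List.length_singleton] at h
    interval_cases i
    simp [SimpleGraph.Walk.getVert_zero]
  | cons hadj q ih =>
    intro i h
    cases i with
    | zero => simp [SimpleGraph.Walk.getVert_zero]
    | succ i =>
      rw [SimpleGraph.Walk.getVert_cons_succ]
      simp only [SimpleGraph.Walk.support_cons, List.length_cons] at h ⊢
      rw [List.getElem_cons_succ]
      exact ih i (by simpa using Nat.lt_of_succ_lt_succ h)

lemma IsPath.getVert_inj {u v : α} {p : G.Walk u v} (hp : p.IsPath) {i j : ℕ}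
    (hi : i ≤ p.length) (hj : j ≤ p.length) (h : p.getVert i = p.getVert j) : i = j := by
  have hi' : i < p.support.length := by rw [SimpleGraph.Walk.length_support]; omega
  have hj' : j < p.support.length := by rw [SimpleGraph.Walk.length_support]; omega
  rw [getVert_eq_support_getElem p i hi', getVert_eq_support_getElem p j hj'] at h
  exact (hp.support_nodup.getElem_inj_iff).mp h

lemma getVert_mem_support {u v : α} (p : G.Walk u v) (i : ℕ) :
    p.getVert i ∈ p.support := by
  rcases le_or_gt i p.length with h | h
  · rw [SimpleGraph.Walk.mem_support_iff_exists_getVert]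
    exact ⟨i, rfl, h⟩
  · rw [p.getVert_of_length_le h.le]
    exact SimpleGraph.Walk.end_mem_support p

lemma exists_hitting (T : Set α) :
    ∀ {w v : α} (_ : G.Walk w v), v ∈ T →
    ∃ x, x ∈ T ∧ ∃ r : G.Walk w x, r.IsPath ∧ ∀ y ∈ r.support, y ≠ x → y ∉ T := by
  intro w v q hv
  induction q with
  | nil =>
    exact ⟨_, hv, SimpleGraph.Walk.nil, by simp, fun y hy hne => by
      simp only [SimpleGraph.Walk.support_nil, List.mem_singleton] at hy
      exact absurd hy hne⟩
  | @cons w m v hadj q ih =>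
    by_cases hw : w ∈ T
    · exact ⟨w, hw, SimpleGraph.Walk.nil, by simp, fun y hy hne => by
        simp only [SimpleGraph.Walk.support_nil, List.mem_singleton] at hy
        exact absurd hy hne⟩
    · obtain ⟨x, hx, r, _, hprop⟩ := ih hv
      refine ⟨x, hx, (SimpleGraph.Walk.cons hadj r).bypass,
        SimpleGraph.Walk.bypass_isPath _, fun y hy hne => ?_⟩
      have := SimpleGraph.Walk.support_bypass_subset _ hy
      rw [SimpleGraph.Walk.support_cons] at this
      rcases List.mem_cons.mp this with h | h
      · subst h; exact hw
      · exact hprop y h hne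

end Walks

lemma exists_witness {n : ℕ} {E : Finset (Sym2 (Fin n))} {v u w : Fin n}
    (hu : (SimpleGraph.fromEdgeSet (E : Set (Sym2 (Fin n)))).Reachable u v)
    (hw : (SimpleGraph.fromEdgeSet (E : Set (Sym2 (Fin n)))).Reachable w v) :
    ∃ θ : Σ _a : ℕ, Σ _b : ℕ, Wit n _a _b,
      θ.1 < n ∧ θ.2.1 < n ∧ Good θ.2.2 ∧ (∀ e ∈ WS θ.2.2, e ∈ E) ∧
      θ.2.2.1 0 = v ∧ θ.2.2.1 (Fin.last _) = u ∧ pe θ.2.2 0 = w := by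
  set G := SimpleGraph.fromEdgeSet (E : Set (Sym2 (Fin n))) with hG
  obtain ⟨p1⟩ := hu.symm
  have hP1 : p1.bypass.IsPath := p1.bypass_isPath
  set P1 : G.Walk v u := p1.bypass with hP1def
  obtain ⟨q⟩ := hw
  have hvT : v ∈ {y | y ∈ P1.support} := P1.start_mem_support
  obtain ⟨x, hx, r, hr, hprop⟩ := exists_hitting {y | y ∈ P1.support} q hvT
  obtain ⟨jn, hjx, hjle⟩ := SimpleGraph.Walk.mem_support_iff_exists_getVert.mp hx
  have hjlt : jn < P1.length + 1 := by omega
  have hpe : ∀ m : Fin (r.length + 1),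
      pe ((fun i => P1.getVert ↑i, ⟨jn, hjlt⟩, fun i => r.getVert ↑i) :
        Wit n P1.length r.length) m = r.getVert ↑m := by
    intro m
    by_cases hm : (m : ℕ) < r.length
    · rw [pe, dif_pos hm]
    · rw [pe, dif_neg hm]
      have hmv : (m : ℕ) = r.length := by omega
      show P1.getVert jn = r.getVert ↑m
      rw [hjx, hmv, r.getVert_length]
  refine ⟨⟨P1.length, r.length,
    fun i => P1.getVert ↑i, ⟨jn, hjlt⟩, fun i => r.getVert ↑i⟩,
    ?_, ?_, ⟨?_, ?_, ?_⟩, ?_, ?_, ?_, ?_⟩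
  · show P1.length < n
    have h1 : P1.support.length ≤ n := by
      have := hP1.support_nodup.length_le_card
      simpa using this
    rw [SimpleGraph.Walk.length_support] at h1
    omega
  · show r.length < n
    have h1 : r.support.length ≤ n := by
      have := hr.support_nodup.length_le_card
      simpa using this
    rw [SimpleGraph.Walk.length_support] at h1
    omega
  · show Function.Injective (fun i : Fin (P1.length+1) => P1.getVert ↑i)
    intro i i' hii
    dsimp only at hii
    apply Fin.ext
    exact IsPath.getVert_inj hP1 (by omega) (by omega) hii
  · show Function.Injective (fun i : Fin r.length => r.getVert ↑i)
    intro i i' hii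
    dsimp only at hii
    apply Fin.ext
    exact IsPath.getVert_inj hr (by omega) (by omega) hii
  · show ∀ i : Fin r.length, r.getVert ↑i ∉ Set.range (fun i : Fin (P1.length+1) => P1.getVert ↑i)
    rintro i ⟨i', hi'⟩
    dsimp only at hi'
    have hne : r.getVert ↑i ≠ x := by
      intro hE
      have hieq : (i : ℕ) = r.length := IsPath.getVert_inj hr (by omega) (le_refl _)
        (by rw [hE]; exact r.getVert_length.symm)
      omega
    have hmem : r.getVert ↑i ∈ r.support := getVert_mem_support r ↑i
    have hnotT := hprop _ hmem hne
    apply hnotT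
    show r.getVert ↑i ∈ P1.support
    rw [← hi']
    exact getVert_mem_support P1 ↑i'
  · intro e he
    have key : ∀ y z : Fin n, G.Adj y z → s(y, z) ∈ E := by
      intro y z hyz
      rw [hG, SimpleGraph.fromEdgeSet_adj] at hyz
      exact hyz.1
    rw [WS, Finset.mem_union] at he
    rcases he with he | he <;> rw [mem_edgesOf] at he <;> obtain ⟨i, hi⟩ := he <;> subst hi
    · apply key
      have := P1.adj_getVert_succ (i := (i : ℕ)) i.isLt
      simpa using this
    · rw [hpe i.castSucc, hpe i.succ]
      apply key
      have := r.adj_getVert_succ (i := (i : ℕ)) i.isLt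
      simpa using this
  · show P1.getVert 0 = v
    exact P1.getVert_zero
  · show P1.getVert ↑(Fin.last P1.length) = u
    rw [Fin.val_last]
    exact P1.getVert_length
  · rw [hpe 0]
    show r.getVert 0 = w
    exact r.getVert_zero



lemma geom1 {c : ℝ} (h0 : 0 ≤ c) (h1 : c < 1) (n : ℕ) :
    ∑ b ∈ Finset.range n, c ^ b ≤ (1 - c)⁻¹ :=
  sum_le_hasSum _ (fun i _ => pow_nonneg h0 i) (hasSum_geometric_of_lt_one h0 h1)

lemma geom2 {c : ℝ} (h0 : 0 ≤ c) (h1 : c < 1) (n : ℕ) :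
    ∑ a ∈ Finset.range n, ((a : ℝ) + 1) * c ^ a ≤ ((1 - c)⁻¹) ^ 2 := by
  have hnorm : ‖c‖ < 1 := by rw [Real.norm_eq_abs, abs_of_nonneg h0]; exact h1
  have hs1 : HasSum (fun a : ℕ => (a : ℝ) * c ^ a) (c / (1 - c) ^ 2) :=
    hasSum_coe_mul_geometric_of_norm_lt_one hnorm
  have hs2 : HasSum (fun a : ℕ => c ^ a) (1 - c)⁻¹ := hasSum_geometric_of_lt_one h0 h1
  have hs : HasSum (fun a : ℕ => ((a : ℝ) + 1) * c ^ a)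
      (c / (1 - c) ^ 2 + (1 - c)⁻¹) := by
    have := hs1.add hs2
    convert this using 2 with a
    ring
  have hval : c / (1 - c) ^ 2 + (1 - c)⁻¹ = ((1 - c)⁻¹) ^ 2 := by
    have hne : (1 : ℝ) - c ≠ 0 := by linarith
    field_simp
    ring
  rw [← hval]
  exact sum_le_hasSum _ (fun i _ => by positivity) hs



lemma compSize_eq {n : ℕ} (E : Finset (Sym2 (Fin n))) (v : Fin n) :
    compSize E v = (Finset.univ.filter fun u =>
      (SimpleGraph.fromEdgeSet (E : Set (Sym2 (Fin n)))).Reachable u v).card := by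
  rw [compSize, show {u | (SimpleGraph.fromEdgeSet (E : Set (Sym2 (Fin n)))).Reachable u v}
      = ↑(Finset.univ.filter fun u =>
        (SimpleGraph.fromEdgeSet (E : Set (Sym2 (Fin n)))).Reachable u v) by
    ext u; simp, Set.ncard_coe_finset]

noncomputable def FF {n M : ℕ}
    (x : Σ _E : Finset (Sym2 (Fin n)), Σ _v : Fin n, Fin n × Fin n) :
    Σ _θ : (Σ _a : ℕ, Σ _b : ℕ, Wit n _a _b), Finset (Sym2 (Fin n)) :=
  if h : (SimpleGraph.fromEdgeSet ((x.1 : Set (Sym2 (Fin n))))).Reachable x.2.2.1 x.2.1 ∧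
         (SimpleGraph.fromEdgeSet ((x.1 : Set (Sym2 (Fin n))))).Reachable x.2.2.2 x.2.1
  then ⟨(exists_witness h.1 h.2).choose, x.1⟩
  else ⟨⟨0, 0, fun _ => x.2.1, 0, fun i => i.elim0⟩, x.1⟩

lemma cardF_le {n M a b : ℕ} (hMN : M ≤ (Dset n).card) (hN0 : 0 < (Dset n).card)
    (θ : Wit n a b) (hθ : Good θ) :
    (((edgeSets n M).filter fun E' => WS θ ⊆ E').card : ℝ)
      ≤ ((edgeSets n M).card : ℝ) * ((M : ℝ) / ((Dset n).card : ℝ)) ^ (a + b) := by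
  have h := prob_bound (WS θ) (WS_nondiag hθ) hMN
  rw [WS_card hθ] at h
  have hNr : (0 : ℝ) < ((Dset n).card : ℝ) := by exact_mod_cast hN0
  rw [div_pow, ← mul_div_assoc, le_div_iff₀ (by positivity)]
  calc (((edgeSets n M).filter fun E' => WS θ ⊆ E').card : ℝ) * ((Dset n).card : ℝ) ^ (a + b)
      = ((((edgeSets n M).filter fun E' => WS θ ⊆ E').card * (Dset n).card ^ (a + b) : ℕ) : ℝ) := by
        push_cast; ring
    _ ≤ (((edgeSets n M).card * M ^ (a + b) : ℕ) : ℝ) := by exact_mod_cast h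
    _ = ((edgeSets n M).card : ℝ) * (M : ℝ) ^ (a + b) := by push_cast; ring

set_option maxHeartbeats 1000000 in
lemma core (n M : ℕ) (hMN : M ≤ (Dset n).card) (hN0 : 0 < (Dset n).card) (c : ℝ)
    (hc0 : 0 ≤ c) (hc1 : c < 1) (hc : (n : ℝ) * M ≤ c * ((Dset n).card : ℝ)) :
    ∑ v : Fin n, (∑ E ∈ edgeSets n M, (compSize E v : ℝ) ^ 2) / ((edgeSets n M).card : ℝ)
      ≤ ((1 - c)⁻¹) ^ 3 * n := by
  classical
  set Ω := edgeSets n M with hΩdef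
  have hΩpos : 0 < Ω.card := by
    rw [hΩdef, card_edgeSets]; exact Nat.choose_pos hMN
  have hΩr : (0 : ℝ) < (Ω.card : ℝ) := by exact_mod_cast hΩpos
  have hNr : (0 : ℝ) < ((Dset n).card : ℝ) := by exact_mod_cast hN0
  set K : ℕ := ∑ E ∈ Ω, ∑ v : Fin n, (compSize E v) ^ 2 with hK
  -- Step 1 : rewrite the LHS as K / |Ω|
  have hLHS : ∑ v : Fin n, (∑ E ∈ Ω, (compSize E v : ℝ) ^ 2) / (Ω.card : ℝ)
      = (K : ℝ) / (Ω.card : ℝ) := by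
    rw [← Finset.sum_div]
    congr 1
    rw [hK]
    push_cast
    rw [Finset.sum_comm]
  -- Step 2 : K as the cardinality of a sigma finset of triples
  set BigS : Finset (Σ _E : Finset (Sym2 (Fin n)), Σ _v : Fin n, Fin n × Fin n) :=
    Ω.sigma (fun E => Finset.univ.sigma (fun v : Fin n =>
      (Finset.univ.filter fun u =>
        (SimpleGraph.fromEdgeSet (E : Set (Sym2 (Fin n)))).Reachable u v) ×ˢ
      (Finset.univ.filter fun w =>
        (SimpleGraph.fromEdgeSet (E : Set (Sym2 (Fin n)))).Reachable w v))) with hBigS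
  have hK2 : K = BigS.card := by
    rw [hBigS, Finset.card_sigma, hK]
    refine Finset.sum_congr rfl (fun E _ => ?_)
    rw [Finset.card_sigma]
    refine Finset.sum_congr rfl (fun v _ => ?_)
    rw [Finset.card_product, compSize_eq, sq]
  -- The witness finset
  set Wfin : Finset (Σ _a : ℕ, Σ _b : ℕ, Wit n _a _b) :=
    (Finset.range n).sigma (fun _a => (Finset.range n).sigma (fun _b =>
      Finset.univ.filter (fun θ : Wit n _a _b => Good θ))) with hWfin
  set Target : Finset (Σ _θ : (Σ _a : ℕ, Σ _b : ℕ, Wit n _a _b), Finset (Sym2 (Fin n))) :=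
    Wfin.sigma (fun θ => Ω.filter fun E' => WS θ.2.2 ⊆ E') with hTarget
  -- Step 3 : injection
  have hinj : BigS.card ≤ Target.card := by
    apply Finset.card_le_card_of_injOn (FF (M := M))
    · rintro ⟨Ex, vx, ux, wx⟩ hx
      simp only [hBigS, Finset.mem_coe, Finset.mem_sigma, Finset.mem_univ, true_and, Finset.mem_product,
        Finset.mem_filter] at hx
      obtain ⟨hEx, hru, hrw⟩ := hx
      have hcond : (SimpleGraph.fromEdgeSet ((Ex : Set (Sym2 (Fin n))))).Reachable ux vx ∧
          (SimpleGraph.fromEdgeSet ((Ex : Set (Sym2 (Fin n))))).Reachable wx vx := ⟨hru, hrw⟩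
      have hFF : FF (M := M) ⟨Ex, vx, ux, wx⟩
          = ⟨(exists_witness hcond.1 hcond.2).choose, Ex⟩ := dif_pos hcond
      rw [hFF]
      have spec := Classical.choose_spec (exists_witness hcond.1 hcond.2)
      rw [hTarget, Finset.mem_coe, Finset.mem_sigma]
      constructor
      · rw [hWfin]
        simp only [Finset.mem_sigma, Finset.mem_range, Finset.mem_filter, Finset.mem_univ,
          true_and]
        exact ⟨spec.1, spec.2.1, spec.2.2.1⟩
      · rw [Finset.mem_filter]
        exact ⟨hEx, fun e he => spec.2.2.2.1 e he⟩
    · rintro ⟨Ex, vx, ux, wx⟩ hx ⟨Ey, vy, uy, wy⟩ hy heq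
      simp only [hBigS, Finset.coe_sigma, Set.mem_sigma_iff] at hx hy
      simp only [hBigS, Finset.mem_coe, Finset.mem_sigma, Finset.mem_univ, true_and,
        Finset.mem_product, Finset.mem_filter] at hx hy
      obtain ⟨hEx, hrux, hrwx⟩ := hx
      obtain ⟨hEy, hruy, hrwy⟩ := hy
      have hcx : (SimpleGraph.fromEdgeSet ((Ex : Set (Sym2 (Fin n))))).Reachable ux vx ∧
          (SimpleGraph.fromEdgeSet ((Ex : Set (Sym2 (Fin n))))).Reachable wx vx := ⟨hrux, hrwx⟩
      have hcy : (SimpleGraph.fromEdgeSet ((Ey : Set (Sym2 (Fin n))))).Reachable uy vy ∧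
          (SimpleGraph.fromEdgeSet ((Ey : Set (Sym2 (Fin n))))).Reachable wy vy := ⟨hruy, hrwy⟩
      have hFFx : FF (M := M) ⟨Ex, vx, ux, wx⟩
          = ⟨(exists_witness hcx.1 hcx.2).choose, Ex⟩ := dif_pos hcx
      have hFFy : FF (M := M) ⟨Ey, vy, uy, wy⟩
          = ⟨(exists_witness hcy.1 hcy.2).choose, Ey⟩ := dif_pos hcy
      rw [hFFx, hFFy] at heq
      have hθ : (exists_witness hcx.1 hcx.2).choose = (exists_witness hcy.1 hcy.2).choose :=
        congrArg Sigma.fst heq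
      have hE : Ex = Ey := by
        have := (Sigma.mk.inj_iff.mp heq).2
        exact eq_of_heq this
      have specx := Classical.choose_spec (exists_witness hcx.1 hcx.2)
      have specy := Classical.choose_spec (exists_witness hcy.1 hcy.2)
      have hv : vx = vy := by
        rw [← specx.2.2.2.2.1, ← specy.2.2.2.2.1]
        exact congrArg (fun θ : Σ _a : ℕ, Σ _b : ℕ, Wit n _a _b => θ.2.2.1 0) hθ
      have hu : ux = uy := by
        rw [← specx.2.2.2.2.2.1, ← specy.2.2.2.2.2.1]
        exact congrArg (fun θ : Σ _a : ℕ, Σ _b : ℕ, Wit n _a _b => θ.2.2.1 (Fin.last θ.1)) hθ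
      have hw : wx = wy := by
        rw [← specx.2.2.2.2.2.2, ← specy.2.2.2.2.2.2]
        exact congrArg (fun θ : Σ _a : ℕ, Σ _b : ℕ, Wit n _a _b => pe θ.2.2 0) hθ
      subst hE; subst hv; subst hu; subst hw
      rfl
  -- Step 4 : compute the cardinality of the target
  have hTcard : (Target.card : ℝ)
      = ∑ a ∈ Finset.range n, ∑ b ∈ Finset.range n,
          ∑ θ ∈ Finset.univ.filter (fun θ : Wit n a b => Good θ),
            ((Ω.filter fun E' => WS θ ⊆ E').card : ℝ) := by
    rw [hTarget, Finset.card_sigma, hWfin, Finset.sum_sigma]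
    push_cast
    refine Finset.sum_congr rfl (fun a _ => ?_)
    rw [Finset.sum_sigma]
  -- Step 5 : bound everything
  set ρ : ℝ := (M : ℝ) / ((Dset n).card : ℝ) with hρ
  have hρ0 : 0 ≤ ρ := by positivity
  have hd : (n : ℝ) * ρ ≤ c := by
    rw [hρ, ← mul_div_assoc, div_le_iff₀ hNr]
    exact hc
  have hd0 : 0 ≤ (n : ℝ) * ρ := by positivity
  have hbound : (Target.card : ℝ) ≤ (Ω.card : ℝ) * (((1 - c)⁻¹) ^ 3 * n) := by
    rw [hTcard]
    have step1 : ∀ a ∈ Finset.range n, ∀ b ∈ Finset.range n,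
        ∑ θ ∈ Finset.univ.filter (fun θ : Wit n a b => Good θ),
            ((Ω.filter fun E' => WS θ ⊆ E').card : ℝ)
          ≤ ((n : ℝ) ^ (a+1) * ((a+1) * (n : ℝ) ^ b)) * ((Ω.card : ℝ) * ρ ^ (a+b)) := by
      intro a _ b _
      calc ∑ θ ∈ Finset.univ.filter (fun θ : Wit n a b => Good θ),
              ((Ω.filter fun E' => WS θ ⊆ E').card : ℝ)
          ≤ ∑ _θ ∈ Finset.univ.filter (fun θ : Wit n a b => Good θ),
              ((Ω.card : ℝ) * ρ ^ (a+b)) := by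
            refine Finset.sum_le_sum (fun θ hθ => ?_)
            rw [Finset.mem_filter] at hθ
            exact cardF_le hMN hN0 θ hθ.2
        _ = ((Finset.univ.filter (fun θ : Wit n a b => Good θ)).card : ℝ)
              * ((Ω.card : ℝ) * ρ ^ (a+b)) := by
            rw [Finset.sum_const, nsmul_eq_mul]
        _ ≤ ((n : ℝ) ^ (a+1) * ((a+1) * (n : ℝ) ^ b)) * ((Ω.card : ℝ) * ρ ^ (a+b)) := by
            apply mul_le_mul_of_nonneg_right _ (by positivity)
            have h1 : (Finset.univ.filter (fun θ : Wit n a b => Good θ)).card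
                ≤ Fintype.card (Wit n a b) := by
              rw [← Finset.card_univ]
              exact Finset.card_filter_le _ _
            have h2 : (Fintype.card (Wit n a b) : ℝ)
                = (n : ℝ) ^ (a+1) * ((a+1) * (n : ℝ) ^ b) := by
              simp only [Fintype.card_prod, Fintype.card_fun, Fintype.card_fin]
              push_cast
              ring
            calc ((Finset.univ.filter (fun θ : Wit n a b => Good θ)).card : ℝ)
                ≤ (Fintype.card (Wit n a b) : ℝ) := by exact_mod_cast h1
              _ = _ := h2
    calc ∑ a ∈ Finset.range n, ∑ b ∈ Finset.range n,
            ∑ θ ∈ Finset.univ.filter (fun θ : Wit n a b => Good θ),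
              ((Ω.filter fun E' => WS θ ⊆ E').card : ℝ)
        ≤ ∑ a ∈ Finset.range n, ∑ b ∈ Finset.range n,
            ((n : ℝ) ^ (a+1) * ((a+1) * (n : ℝ) ^ b)) * ((Ω.card : ℝ) * ρ ^ (a+b)) := by
          refine Finset.sum_le_sum (fun a ha => Finset.sum_le_sum (fun b hb => ?_))
          exact step1 a ha b hb
      _ = ((Ω.card : ℝ) * (n : ℝ)) * ∑ a ∈ Finset.range n, ∑ b ∈ Finset.range n,
            (((a : ℝ)+1) * ((n : ℝ) * ρ) ^ a) * (((n : ℝ) * ρ) ^ b) := by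
          rw [Finset.mul_sum]
          refine Finset.sum_congr rfl (fun a _ => ?_)
          rw [Finset.mul_sum]
          refine Finset.sum_congr rfl (fun b _ => ?_)
          rw [mul_pow, mul_pow, pow_add]
          ring
      _ = ((Ω.card : ℝ) * (n : ℝ)) * ((∑ a ∈ Finset.range n, ((a : ℝ)+1) * ((n : ℝ) * ρ) ^ a)
            * (∑ b ∈ Finset.range n, ((n : ℝ) * ρ) ^ b)) := by
          rw [Finset.sum_mul_sum]
      _ ≤ ((Ω.card : ℝ) * (n : ℝ)) * ((∑ a ∈ Finset.range n, ((a : ℝ)+1) * c ^ a)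
            * (∑ b ∈ Finset.range n, c ^ b)) := by
          apply mul_le_mul_of_nonneg_left _ (by positivity)
          apply mul_le_mul
          · refine Finset.sum_le_sum (fun a _ => ?_)
            apply mul_le_mul_of_nonneg_left _ (by positivity)
            exact pow_le_pow_left₀ hd0 hd a
          · refine Finset.sum_le_sum (fun b _ => ?_)
            exact pow_le_pow_left₀ hd0 hd b
          · exact Finset.sum_nonneg (fun b _ => by positivity)
          · exact Finset.sum_nonneg (fun a _ => by positivity)
      _ ≤ ((Ω.card : ℝ) * (n : ℝ)) * (((1 - c)⁻¹) ^ 2 * (1 - c)⁻¹) := by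
          apply mul_le_mul_of_nonneg_left _ (by positivity)
          have hinv : (0 : ℝ) ≤ (1 - c)⁻¹ := by
            apply inv_nonneg.mpr; linarith
          apply mul_le_mul (geom2 hc0 hc1 n) (geom1 hc0 hc1 n)
            (Finset.sum_nonneg (fun b _ => by positivity)) (by positivity)
      _ = (Ω.card : ℝ) * (((1 - c)⁻¹) ^ 3 * n) := by ring
  -- Conclusion
  rw [hLHS, div_le_iff₀ hΩr]
  calc (K : ℝ) ≤ (Target.card : ℝ) := by
        exact_mod_cast hK2 ▸ hinj
    _ ≤ (Ω.card : ℝ) * (((1 - c)⁻¹) ^ 3 * n) := hbound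
    _ = ((1 - c)⁻¹) ^ 3 * n * (Ω.card : ℝ) := by ring

end ER

/-- **Equation (3.3).** Let `G(n, M)` be the uniform Erdős–Rényi random graph with `n` vertices
and `M = M(n) ∼ 0.15 n` edges.  Then, for sufficiently large `n`,
`Σ_{v} E[|C(v)|²] ≤ 5n`. -/
theorem stmt_14 :
    ∀ M : ℕ → ℕ, Tendsto (fun n => (M n : ℝ) / (n : ℝ)) atTop (nhds 0.15) →
      ∀ᶠ n : ℕ in atTop,
        ∑ v : Fin n,
            (∑ E ∈ edgeSets n (M n), (compSize E v : ℝ) ^ 2) / ((edgeSets n (M n)).card : ℝ) ≤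
          5 * (n : ℝ) := by
  intro M hM
  have h1 : ∀ᶠ n : ℕ in atTop, (M n : ℝ) / n ≤ 0.16 :=
    hM.eventually (eventually_le_nhds (by norm_num))
  filter_upwards [h1, eventually_ge_atTop 12] with n hn1 hn2
  have hnr : (12 : ℝ) ≤ (n : ℝ) := by exact_mod_cast hn2
  have hnpos : (0 : ℝ) < n := by linarith
  have hMr : (M n : ℝ) ≤ 0.16 * n := by
    rw [div_le_iff₀ hnpos] at hn1; linarith
  have hNcard : ((ER.Dset n).card : ℝ) = (n : ℝ) * ((n : ℝ) - 1) / 2 := by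
    rw [ER.card_Dset]; exact_mod_cast Nat.cast_choose_two (K := ℝ) n
  have hMN : M n ≤ (ER.Dset n).card := by
    have h : (M n : ℝ) ≤ ((ER.Dset n).card : ℝ) := by rw [hNcard]; nlinarith
    exact_mod_cast h
  have hN0 : 0 < (ER.Dset n).card := by
    have h : (0 : ℝ) < ((ER.Dset n).card : ℝ) := by rw [hNcard]; nlinarith
    exact_mod_cast h
  have hc : (n : ℝ) * (M n) ≤ 0.35 * ((ER.Dset n).card : ℝ) := by
    rw [hNcard]; nlinarith
  have hcore := ER.core n (M n) hMN hN0 0.35 (by norm_num) (by norm_num) hc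
  refine le_trans hcore ?_
  have h5 : ((1 - (0.35 : ℝ))⁻¹) ^ 3 ≤ 5 := by norm_num
  nlinarith
end
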